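/- If kc² + f̂c - (f̂c₀ + g) = 0, ξ = k(r-m(s)) < 0, θ arbitrary, and ρ > 0, then the Eulerian pressure gradient component ∂P/∂z computed from the label-coordinate gradient (P_q, P_s, P_r) = (0, -ρ(kc²+f̂c)m_s e^{2ξ} + ρ(f+βs)c₀, ρ(kc²+f̂c)e^{2ξ} - ρ(f̂c₀+g)) via the inverse Jacobian equals -ρ(f̂c₀+g)(1 - e^ξ cos θ), which is strictly negative when f̂c₀+g > 0. -/
import Mathlib


open Real

/-- the Eulerian vertical pressure gradient equals
-ρ(fhatc₀+g)(1 - e^ξ cos θ) and is strictly negative. -/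
theorem pressure_decreasing_with_height
    (k c c₀ f β fhat g s ms ρ ξ θ : ℝ)
    (hk : 0 < k) (hc : 0 < c) (hρ : 0 < ρ)
    (hghat : 0 < fhat * c₀ + g)
    (hdisp : k * c ^ 2 + fhat * c - (fhat * c₀ + g) = 0)
    (hξ : ξ < 0)
    (hms : ms = (f + β * s) * c / (fhat * c₀ + g))
    (Pq Ps Pr : ℝ)
    (hPq : Pq = 0)
    (hPs : Ps = -(ρ * (k * c ^ 2 + fhat * c) * ms * exp (2 * ξ)) + ρ * (f + β * s) * c₀)
    (hPr : Pr = ρ * (k * c ^ 2 + fhat * c) * exp (2 * ξ) - ρ * (fhat * c₀ + g)) :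
    Pq * (exp ξ * sin θ / (1 - exp (2 * ξ))) + Ps * 0 +
        Pr * ((1 - exp ξ * cos θ) / (1 - exp (2 * ξ))) =
      -(ρ * (fhat * c₀ + g) * (1 - exp ξ * cos θ)) ∧
    -(ρ * (fhat * c₀ + g) * (1 - exp ξ * cos θ)) < 0 := by
  have hA : k * c ^ 2 + fhat * c = fhat * c₀ + g := by linarith
  have he2 : exp (2 * ξ) < 1 := by
    rw [show (1:ℝ) = exp 0 by simp]; exact Real.exp_lt_exp.2 (by linarith)
  have hden : 1 - exp (2 * ξ) ≠ 0 := by linarith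
  have he1 : exp ξ < 1 := by
    rw [show (1:ℝ) = exp 0 by simp]; exact Real.exp_lt_exp.2 hξ
  have hcos : exp ξ * cos θ < 1 :=
    lt_of_le_of_lt (by nlinarith [neg_one_le_cos θ, cos_le_one θ, (exp_pos ξ).le]) he1
  constructor
  · subst hPq hPs hPr hms
    rw [hA]
    field_simp
    ring
  · have : 0 < ρ * (fhat * c₀ + g) * (1 - exp ξ * cos θ) := mul_pos (mul_pos hρ hghat) (by linarith)
    linarith
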